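/- Let X be a real Hilbert space, let m ≥ 2, for each i ∈ {1,…,m} let T_i : X → X be firmly nonexpansive with minimal displacement vector v_i, and let λ_1,…,λ_m ∈ (0,1] with ∑_{i=1}^m λ_i = 1. Let v̄ be the minimal displacement vector of the convex combination T̄ = ∑_{i=1}^m λ_i T_i. Then ‖v̄‖ ≤ ‖∑_{i=1}^m λ_i v_i‖. -/

import Mathlib

set_option maxHeartbeats 1000000 in

theorem stmt_11 {X : Type*} [NormedAddCommGroup X] [InnerProductSpace ℝ X] [CompleteSpace X]
    (m : ℕ) (hm : 2 ≤ m) (T : Fin m → X → X)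
    (hT : ∀ i, ∀ x y : X, ‖T i x - T i y‖ ^ 2 ≤ (inner ℝ (x - y) (T i x - T i y) : ℝ))
    (v : Fin m → X)
    (hv : ∀ i, v i ∈ closure (Set.range (fun x => x - T i x)))
    (hvmin : ∀ i, ∀ w ∈ closure (Set.range (fun x => x - T i x)), ‖v i‖ ≤ ‖w‖)
    (lam : Fin m → ℝ) (hlam : ∀ i, lam i ∈ Set.Ioc (0 : ℝ) 1) (hsum : ∑ i, lam i = 1)
    (vbar : X)
    (hvbar : vbar ∈ closure (Set.range (fun x => x - ∑ i, lam i • T i x)))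
    (hvbarmin : ∀ w ∈ closure (Set.range (fun x => x - ∑ i, lam i • T i x)), ‖vbar‖ ≤ ‖w‖) :
    ‖vbar‖ ≤ ‖∑ i, lam i • v i‖ := by
  haveI : Nonempty X := ⟨0⟩
  -- each T i is nonexpansive
  have hne : ∀ i (x y : X), ‖T i x - T i y‖ ≤ ‖x - y‖ := by
    intro i x y
    rcases eq_or_lt_of_le (norm_nonneg (T i x - T i y)) with h | h
    · rw [← h]; exact norm_nonneg _
    · have h1 := hT i x y
      have h2 : (inner ℝ (x - y) (T i x - T i y) : ℝ) ≤ ‖x - y‖ * ‖T i x - T i y‖ :=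
        real_inner_le_norm _ _
      nlinarith
  set Tb : X → X := fun x => ∑ i, lam i • T i x with hTbdef
  have hTbne : ∀ x y : X, ‖Tb x - Tb y‖ ≤ ‖x - y‖ := by
    intro x y
    have e : Tb x - Tb y = ∑ i, lam i • (T i x - T i y) := by
      simp [hTbdef, smul_sub, Finset.sum_sub_distrib]
    rw [e]
    calc ‖∑ i, lam i • (T i x - T i y)‖ ≤ ∑ i, ‖lam i • (T i x - T i y)‖ := norm_sum_le _ _
      _ ≤ ∑ i, lam i * ‖x - y‖ := by
          apply Finset.sum_le_sum; intro i _
          rw [norm_smul, Real.norm_eq_abs, abs_of_pos (hlam i).1]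
          exact mul_le_mul_of_nonneg_left (hne i x y) (le_of_lt (hlam i).1)
      _ = ‖x - y‖ := by rw [← Finset.sum_mul, hsum, one_mul]
  set V : X := ∑ i, lam i • v i with hVdef
  -- key estimate
  have key : ∀ ε > (0:ℝ), ∃ K ≥ (0:ℝ), ∀ c > (0:ℝ),
      ∃ s : ℝ, ‖vbar‖ ≤ s ∧ s ^ 2 ≤ s * (‖V‖ + ε) + c * K := by
    intro ε hε
    have hy : ∀ i, ∃ y : X, ‖(y - T i y) - v i‖ < ε := by
      intro i
      have h := hv i
      rw [Metric.mem_closure_iff] at h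
      obtain ⟨b, hb, hdist⟩ := h ε hε
      obtain ⟨y, rfl⟩ := hb
      exact ⟨y, by rwa [← dist_eq_norm, dist_comm]⟩
    choose y hyv using hy
    refine ⟨∑ i, lam i * (‖y i‖ ^ 2 / 4), Finset.sum_nonneg fun i _ => mul_nonneg (hlam i).1.le (by positivity), ?_⟩
    intro c hc
    set t : ℝ := (1 + c)⁻¹ with htdef
    have h1c : (0:ℝ) < 1 + c := by linarith
    have ht0 : 0 < t := by positivity
    have ht1 : t < 1 := by
      rw [htdef, inv_lt_one_iff₀]; right; linarith
    have hlip : LipschitzWith ⟨t, ht0.le⟩ (fun x => t • Tb x) := by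
      apply LipschitzWith.of_dist_le_mul
      intro a b
      simp only [dist_eq_norm, ← smul_sub, norm_smul, Real.norm_eq_abs, abs_of_pos ht0]
      exact mul_le_mul_of_nonneg_left (hTbne a b) ht0.le
    have hcon : ContractingWith ⟨t, ht0.le⟩ (fun x => t • Tb x) := ⟨by exact_mod_cast ht1, hlip⟩
    obtain ⟨x, hfix⟩ : ∃ x : X, t • Tb x = x :=
      ⟨_, hcon.fixedPoint_isFixedPt⟩
    have hTbx : x - Tb x = -(c • x) := by
      have h := congrArg (fun z : X => (1 + c) • z) hfix
      simp only [smul_smul] at h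
      rw [mul_inv_cancel₀ (ne_of_gt h1c), one_smul] at h
      rw [h]
      module
    -- per-index inequality
    have per : ∀ i, (inner ℝ x (v i) : ℝ) - ε * ‖x‖ - ‖y i‖ ^ 2 / 4 ≤
        (inner ℝ x (x - T i x) : ℝ) := by
      intro i
      set a : X := x - T i x
      set b : X := y i - T i (y i)
      have hfirm : ‖a - b‖ ^ 2 ≤ (inner ℝ (x - y i) (a - b) : ℝ) := by
        have hab : a - b = (x - y i) - (T i x - T i (y i)) := by simp only [a, b]; abel
        have e1 : ‖a - b‖ ^ 2 = ‖x - y i‖ ^ 2 - 2 * inner ℝ (x - y i) (T i x - T i (y i)) +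
            ‖T i x - T i (y i)‖ ^ 2 := by
          rw [hab, @norm_sub_sq_real]
        have e2 : (inner ℝ (x - y i) (a - b) : ℝ) =
            ‖x - y i‖ ^ 2 - inner ℝ (x - y i) (T i x - T i (y i)) := by
          rw [hab, inner_sub_right, real_inner_self_eq_norm_sq]
        have := hT i x (y i)
        linarith [e1, e2, this]
      have h2 : (inner ℝ (x - y i) (a - b) : ℝ) =
          inner ℝ x a - inner ℝ x b - inner ℝ (y i) (a - b) := by
        rw [inner_sub_left, inner_sub_right, inner_sub_right]
      have h3 : -(‖y i‖ * ‖a - b‖) ≤ (inner ℝ (y i) (a - b) : ℝ) := by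
        have := abs_real_inner_le_norm (y i) (a - b)
        cases abs_le.mp this with
        | intro l r => linarith
      have h4 : (inner ℝ x (v i) : ℝ) - ‖x‖ * ε ≤ inner ℝ x b := by
        have e : (inner ℝ x (b - v i) : ℝ) = inner ℝ x b - inner ℝ x (v i) := by
          rw [inner_sub_right]
        have h5 : -(‖x‖ * ‖b - v i‖) ≤ (inner ℝ x (b - v i) : ℝ) := by
          have h := abs_real_inner_le_norm x (b - v i)
          rcases abs_le.mp h with ⟨l, r⟩
          linarith
        have h6 : ‖b - v i‖ ≤ ε := le_of_lt (hyv i)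
        nlinarith [norm_nonneg x, norm_nonneg (b - v i)]
      nlinarith [sq_nonneg (‖a - b‖ - ‖y i‖ / 2), norm_nonneg x]
    -- sum the per-index inequalities
    have sum1 : (inner ℝ x (x - Tb x) : ℝ) = ∑ i, lam i * inner ℝ x (x - T i x) := by
      have e : x - Tb x = ∑ i, lam i • (x - T i x) := by
        simp only [hTbdef, smul_sub, Finset.sum_sub_distrib, ← Finset.sum_smul, hsum, one_smul]
      rw [e, inner_sum]
      congr 1; ext i; rw [real_inner_smul_right]
    have sum2 : (inner ℝ x V : ℝ) = ∑ i, lam i * inner ℝ x (v i) := by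
      rw [hVdef, inner_sum]
      congr 1; ext i; rw [real_inner_smul_right]
    have main : (inner ℝ x V : ℝ) - ε * ‖x‖ - ∑ i, lam i * (‖y i‖ ^ 2 / 4) ≤ -(c * ‖x‖ ^ 2) := by
      have lhs : (inner ℝ x (x - Tb x) : ℝ) = -(c * ‖x‖ ^ 2) := by
        rw [hTbx, inner_neg_right, real_inner_smul_right, real_inner_self_eq_norm_sq]
      have step : ∑ i, lam i * (inner ℝ x (v i) - ε * ‖x‖ - ‖y i‖ ^ 2 / 4) ≤
          ∑ i, lam i * inner ℝ x (x - T i x) := by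
        apply Finset.sum_le_sum; intro i _
        exact mul_le_mul_of_nonneg_left (per i) (le_of_lt (hlam i).1)
      have hεsum : ∑ i, lam i * (ε * ‖x‖) = ε * ‖x‖ := by
        rw [← Finset.sum_mul, hsum, one_mul]
      have expand : ∑ i, lam i * ((inner ℝ x (v i) : ℝ) - ε * ‖x‖ - ‖y i‖ ^ 2 / 4) =
          (∑ i, lam i * inner ℝ x (v i)) - ε * ‖x‖ - ∑ i, lam i * (‖y i‖ ^ 2 / 4) := by
        calc ∑ i, lam i * ((inner ℝ x (v i) : ℝ) - ε * ‖x‖ - ‖y i‖ ^ 2 / 4)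
            = ∑ i, (lam i * inner ℝ x (v i) - lam i * (ε * ‖x‖) - lam i * (‖y i‖ ^ 2 / 4)) :=
              Finset.sum_congr rfl (fun i _ => by ring)
          _ = (∑ i, lam i * inner ℝ x (v i)) - ε * ‖x‖ - ∑ i, lam i * (‖y i‖ ^ 2 / 4) := by
              rw [Finset.sum_sub_distrib, Finset.sum_sub_distrib, hεsum]
      rw [← lhs, sum1]
      calc (inner ℝ x V : ℝ) - ε * ‖x‖ - ∑ i, lam i * (‖y i‖ ^ 2 / 4)
          = ∑ i, lam i * ((inner ℝ x (v i) : ℝ) - ε * ‖x‖ - ‖y i‖ ^ 2 / 4) := by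
            rw [sum2, ← expand]
        _ ≤ ∑ i, lam i * inner ℝ x (x - T i x) := step
    -- membership of -(c • x) in the range
    have hmem : ‖vbar‖ ≤ c * ‖x‖ := by
      have : -(c • x) ∈ Set.range (fun z : X => z - ∑ i, lam i • T i z) := ⟨x, by rw [← hTbx]⟩
      have h := hvbarmin _ (subset_closure this)
      rwa [norm_neg, norm_smul, Real.norm_eq_abs, abs_of_pos hc] at h
    refine ⟨c * ‖x‖, hmem, ?_⟩
    have hV : -(inner ℝ x V : ℝ) ≤ ‖x‖ * ‖V‖ := by
      have := abs_real_inner_le_norm x V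
      cases abs_le.mp this with
      | intro l r => linarith
    set K := ∑ i, lam i * (‖y i‖ ^ 2 / 4)
    have base : c * ‖x‖ ^ 2 ≤ ‖x‖ * (‖V‖ + ε) + K := by nlinarith [norm_nonneg x]
    nlinarith [norm_nonneg x, hc.le, mul_le_mul_of_nonneg_left base hc.le]
  -- conclude
  by_contra hcon
  push_neg at hcon
  set N := ‖vbar‖
  set M := ‖V‖
  have hM0 : 0 ≤ M := norm_nonneg _
  have hε : (0:ℝ) < (N - M) / 2 := by simp only [N, M] at hcon ⊢; linarith
  obtain ⟨K, hK0, hkey⟩ := key ((N - M) / 2) hε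
  set b := M + (N - M) / 2 with hbdef
  have hbN : b < N := by simp only [hbdef]; linarith
  have hb0 : 0 ≤ b := by simp only [hbdef]; linarith
  have hN0 : 0 < N := lt_of_le_of_lt hb0 hbN
  have hc : (0:ℝ) < N * (N - b) / (2 * (K + 1)) := by
    apply div_pos (mul_pos hN0 (by linarith)) (by linarith)
  obtain ⟨s, hs1, hs2⟩ := hkey _ hc
  have hsN : N ≤ s := hs1
  have hcK : N * (N - b) / (2 * (K + 1)) * K < N * (N - b) := by
    rw [div_mul_eq_mul_div, div_lt_iff₀ (by linarith : (0:ℝ) < 2 * (K + 1))]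
    nlinarith [mul_pos hN0 (sub_pos.mpr hbN)]
  have hmul : N * (N - b) ≤ s * (s - b) :=
    mul_le_mul hsN (by linarith) (by linarith) (by linarith)
  nlinarith [hmul, hcK, hs2]
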